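/- arXiv:2602.13247 — 6 statements merged into one kernel-verified Lean document; each statement's English description precedes it below -/
import Mathlib

section
/- Let E be a real Banach space and v : E → E a vector field that is C¹ at a point x₀. If α, β : ℝ → E are two integral curves of v on an open interval I containing t₀, with α(t₀) = β(t₀) = x₀, then α and β agree on a neighbourhood of t₀ within I. -/
open Set Metric Filter Topology

/-- **Local uniqueness of integral curves** in a Banach space: if `v : E → E` is `C¹` at `x₀`
and `α`, `β` are integral curves of `v` on an open interval `(a, b)` containing `t₀` with
`α t₀ = β t₀ = x₀`, then `α` and `β` agree on a neighbourhood of `t₀` within `(a, b)`. -/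
theorem isIntegralCurveOn_Ioo_eventuallyEq_of_contDiffAt
    {E : Type*} [NormedAddCommGroup E] [NormedSpace ℝ E] [CompleteSpace E]
    {v : E → E} {x₀ : E} (hv : ContDiffAt ℝ 1 v x₀)
    {α β : ℝ → E} {a b t₀ : ℝ} (ht₀ : t₀ ∈ Ioo a b)
    (hα : ∀ t ∈ Ioo a b, HasDerivWithinAt α (v (α t)) (Ioo a b) t) (hα₀ : α t₀ = x₀)
    (hβ : ∀ t ∈ Ioo a b, HasDerivWithinAt β (v (β t)) (Ioo a b) t) (hβ₀ : β t₀ = x₀) :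
    ∀ᶠ t in 𝓝[Ioo a b] t₀, α t = β t := by
  obtain ⟨K, s, hs, hlip⟩ := hv.exists_lipschitzOnWith
  have hIoo : Ioo a b ∈ 𝓝 t₀ := Ioo_mem_nhds ht₀.1 ht₀.2
  have hα' : ∀ᶠ t in 𝓝 t₀, HasDerivAt α (v (α t)) t :=
    (eventually_mem_nhds_iff.mpr hIoo).mono fun t ht ↦
      (hα t (mem_of_mem_nhds ht)).hasDerivAt ht
  have hβ' : ∀ᶠ t in 𝓝 t₀, HasDerivAt β (v (β t)) t :=
    (eventually_mem_nhds_iff.mpr hIoo).mono fun t ht ↦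
      (hβ t (mem_of_mem_nhds ht)).hasDerivAt ht
  have hαc : ContinuousAt α t₀ := ((hα t₀ ht₀).hasDerivAt hIoo).continuousAt
  have hβc : ContinuousAt β t₀ := ((hβ t₀ ht₀).hasDerivAt hIoo).continuousAt
  have hαs : ∀ᶠ t in 𝓝 t₀, α t ∈ s := hαc (hα₀ ▸ hs)
  have hβs : ∀ᶠ t in 𝓝 t₀, β t ∈ s := hβc (hβ₀ ▸ hs)
  have key : α =ᶠ[𝓝 t₀] β := by
    apply ODE_solution_unique_of_eventually (v := fun _ x ↦ v x) (s := fun _ ↦ s)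
      (Filter.Eventually.of_forall fun _ ↦ hlip) (hα'.and hαs) (hβ'.and hβs)
    rw [hα₀, hβ₀]
  exact key.filter_mono nhdsWithin_le_nhds
end

section
/- Let E be a real Banach space, v : ℝ → E → E a vector field satisfying the Picard–Lindelöf conditions at (t₀, x₀) with constants a, r, L, K on [tmin, tmax], and let α : E → ℝ → E be the corresponding local flow (so that for each x in the closed ball of radius r around x₀, α(x)(t₀) = x and α(x) is an integral curve of v on [tmin, tmax], each α(x) being L-Lipschitz in time). Then the map (t, x) ↦ α(x)(t) is continuous on [tmin, tmax] × closedBall(x₀, r). -/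
open Set Metric NNReal

/-- Time-reversed version of `dist_le_of_trajectories_ODE_of_mem`. -/
theorem dist_le_of_trajectories_ODE_of_mem_left
    {E : Type*} [NormedAddCommGroup E] [NormedSpace ℝ E]
    {v : ℝ → E → E} {s : ℝ → Set E} {K : ℝ≥0} {f g : ℝ → E} {a b δ : ℝ}
    (hv : ∀ t, LipschitzOnWith K (v t) (s t))
    (hf : ContinuousOn f (Icc a b))
    (hf' : ∀ t ∈ Ioc a b, HasDerivWithinAt f (v t (f t)) (Iic t) t)
    (hfs : ∀ t ∈ Ioc a b, f t ∈ s t)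
    (hg : ContinuousOn g (Icc a b))
    (hg' : ∀ t ∈ Ioc a b, HasDerivWithinAt g (v t (g t)) (Iic t) t)
    (hgs : ∀ t ∈ Ioc a b, g t ∈ s t)
    (hb : dist (f b) (g b) ≤ δ) :
    ∀ t ∈ Icc a b, dist (f t) (g t) ≤ δ * Real.exp (K * (b - t)) := by
  set V : ℝ → E → E := fun t x => -v (-t) x with hV
  have hv' : ∀ t, LipschitzOnWith K (V t) (s (-t)) := by
    intro t
    rw [hV, ← one_mul K]
    exact LipschitzWith.id.neg.comp_lipschitzOnWith (hv (-t))
  have hmt : MapsTo Neg.neg (Icc (-b) (-a)) (Icc a b) :=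
    fun _ ht ↦ ⟨le_neg.mp ht.2, neg_le.mp ht.1⟩
  have hmt2 : MapsTo Neg.neg (Ico (-b) (-a)) (Ioc a b) :=
    fun _ ht ↦ ⟨lt_neg.mp ht.2, neg_le.mp ht.1⟩
  have hmt3 (t : ℝ) : MapsTo Neg.neg (Ici t) (Iic (-t)) :=
    fun _ ht' ↦ mem_Iic.mpr (neg_le_neg (mem_Ici.mp ht'))
  have hF : ContinuousOn (f ∘ Neg.neg) (Icc (-b) (-a)) :=
    hf.comp continuousOn_neg hmt
  have hG : ContinuousOn (g ∘ Neg.neg) (Icc (-b) (-a)) :=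
    hg.comp continuousOn_neg hmt
  have hF' : ∀ t ∈ Ico (-b) (-a),
      HasDerivWithinAt (f ∘ Neg.neg) (V t ((f ∘ Neg.neg) t)) (Ici t) t := by
    intro t ht
    have h1 := (hf' (-t) (hmt2 ht)).scomp t ((hasDerivAt_neg t).hasDerivWithinAt) (hmt3 t)
    simpa [hV, Function.comp] using h1
  have hG' : ∀ t ∈ Ico (-b) (-a),
      HasDerivWithinAt (g ∘ Neg.neg) (V t ((g ∘ Neg.neg) t)) (Ici t) t := by
    intro t ht
    have h1 := (hg' (-t) (hmt2 ht)).scomp t ((hasDerivAt_neg t).hasDerivWithinAt) (hmt3 t)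
    simpa [hV, Function.comp] using h1
  have hFs : ∀ t ∈ Ico (-b) (-a), (f ∘ Neg.neg) t ∈ s (-t) :=
    fun t ht => hfs (-t) (hmt2 ht)
  have hGs : ∀ t ∈ Ico (-b) (-a), (g ∘ Neg.neg) t ∈ s (-t) :=
    fun t ht => hgs (-t) (hmt2 ht)
  have hinit : dist ((f ∘ Neg.neg) (-b)) ((g ∘ Neg.neg) (-b)) ≤ δ := by
    simpa using hb
  intro t ht
  have key := dist_le_of_trajectories_ODE_of_mem (s := fun t => s (-t))
    (fun u _ => hv' u) hF hF' hFs hG hG' hGs hinit (-t) ⟨neg_le_neg ht.2, neg_le_neg ht.1⟩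
  simpa [sub_neg_eq_add, add_comm, sub_eq_add_neg] using key

/-- **Continuity of the local flow**: under the Picard–Lindelöf conditions for `v` at `(t₀, x₀)`
with constants `a`, `r`, `L`, `K` on `[tmin, tmax]`, if `α : E → ℝ → E` is a local flow of `v`
(each `α x`, for `x` in the closed ball of radius `r` around `x₀`, starts at `x` at time `t₀`,
is an integral curve of `v` on `[tmin, tmax]`, and is `L`-Lipschitz in time), then
`(t, x) ↦ α x t` is continuous on `[tmin, tmax] × closedBall x₀ r`. -/
theorem continuousOn_flow_of_isPicardLindelof
    {E : Type*} [NormedAddCommGroup E] [NormedSpace ℝ E] [CompleteSpace E]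
    (v : ℝ → E → E) {tmin tmax t₀ : ℝ} (ht₀ : t₀ ∈ Icc tmin tmax) (x₀ : E)
    (a r L K : ℝ≥0)
    (hlip : ∀ t ∈ Icc tmin tmax, LipschitzOnWith K (v t) (closedBall x₀ a))
    (hcont : ∀ x ∈ closedBall x₀ a, ContinuousOn (fun t => v t x) (Icc tmin tmax))
    (hnorm : ∀ t ∈ Icc tmin tmax, ∀ x ∈ closedBall x₀ a, ‖v t x‖ ≤ L)
    (hmul : (L : ℝ) * max (tmax - t₀) (t₀ - tmin) ≤ (a : ℝ) - r)
    (α : E → ℝ → E)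
    (hα : ∀ x ∈ closedBall x₀ r, α x t₀ = x ∧
      (∀ t ∈ Icc tmin tmax, HasDerivWithinAt (α x) (v t (α x t)) (Icc tmin tmax) t) ∧
      LipschitzOnWith L (α x) (Icc tmin tmax)) :
    ContinuousOn (fun p : ℝ × E => α p.2 p.1) (Icc tmin tmax ×ˢ closedBall x₀ r) := by
  set C : ℝ := Real.exp (K * max (tmax - t₀) (t₀ - tmin)) with hC
  set s : ℝ → Set E := fun t => if t ∈ Icc tmin tmax then closedBall x₀ a else ∅ with hs
  have hv : ∀ t, LipschitzOnWith K (v t) (s t) := by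
    intro t
    rw [hs]
    dsimp only
    split_ifs with h
    · exact hlip t h
    · simp
  -- the flow stays in the closed ball of radius a
  have hmem : ∀ x ∈ closedBall x₀ r, ∀ t ∈ Icc tmin tmax, α x t ∈ closedBall x₀ a := by
    intro x hx t ht
    obtain ⟨hinit, _, hLt⟩ := hα x hx
    have h1 : dist (α x t) (α x t₀) ≤ L * dist t t₀ := hLt.dist_le_mul t ht t₀ ht₀
    have h2 : dist t t₀ ≤ max (tmax - t₀) (t₀ - tmin) := by
      rw [Real.dist_eq, abs_sub_le_iff]
      constructor
      · exact le_max_of_le_left (by linarith [ht.2])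
      · exact le_max_of_le_right (by linarith [ht.1])
    have h3 : (L : ℝ) * dist t t₀ ≤ (a : ℝ) - r :=
      le_trans (mul_le_mul_of_nonneg_left h2 L.coe_nonneg) hmul
    have := dist_triangle (α x t) (α x t₀) x₀
    rw [mem_closedBall]
    rw [hinit] at h1 this
    have hxr : dist x x₀ ≤ r := mem_closedBall.mp hx
    linarith
  have hmems : ∀ x ∈ closedBall x₀ r, ∀ t ∈ Icc tmin tmax, α x t ∈ s t := by
    intro x hx t ht
    rw [hs]
    simp only [ht, if_true]
    exact hmem x hx t ht
  -- Gronwall estimate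
  have key : ∀ x ∈ closedBall x₀ r, ∀ y ∈ closedBall x₀ r, ∀ t ∈ Icc tmin tmax,
      dist (α x t) (α y t) ≤ dist x y * C := by
    intro x hx y hy t ht
    obtain ⟨hix, hdx, hLx⟩ := hα x hx
    obtain ⟨hiy, hdy, hLy⟩ := hα y hy
    rcases le_total t₀ t with h | h
    · have est := dist_le_of_trajectories_ODE_of_mem (a := t₀) (b := tmax) (fun u _ => hv u)
        (hLx.continuousOn.mono (Icc_subset_Icc_left ht₀.1))
        (fun u hu => (hdx u ⟨le_trans ht₀.1 hu.1, hu.2.le⟩).mono_of_mem_nhdsWithin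
          (Icc_mem_nhdsGE_of_mem ⟨le_trans ht₀.1 hu.1, hu.2⟩))
        (fun u hu => hmems x hx u ⟨le_trans ht₀.1 hu.1, hu.2.le⟩)
        (hLy.continuousOn.mono (Icc_subset_Icc_left ht₀.1))
        (fun u hu => (hdy u ⟨le_trans ht₀.1 hu.1, hu.2.le⟩).mono_of_mem_nhdsWithin
          (Icc_mem_nhdsGE_of_mem ⟨le_trans ht₀.1 hu.1, hu.2⟩))
        (fun u hu => hmems y hy u ⟨le_trans ht₀.1 hu.1, hu.2.le⟩)
        (by rw [hix, hiy]) t ⟨h, ht.2⟩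
      refine est.trans ?_
      gcongr
      · exact Real.exp_le_exp.mpr (by
          have : t - t₀ ≤ max (tmax - t₀) (t₀ - tmin) := le_max_of_le_left (by linarith [ht.2])
          nlinarith [K.coe_nonneg])
    · have est := dist_le_of_trajectories_ODE_of_mem_left (a := tmin) (b := t₀) hv
        (hLx.continuousOn.mono (Icc_subset_Icc_right ht₀.2))
        (fun u hu => (hdx u ⟨hu.1.le, le_trans hu.2 ht₀.2⟩).mono_of_mem_nhdsWithin
          (Icc_mem_nhdsLE_of_mem ⟨hu.1, le_trans hu.2 ht₀.2⟩))
        (fun u hu => hmems x hx u ⟨hu.1.le, le_trans hu.2 ht₀.2⟩)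
        (hLy.continuousOn.mono (Icc_subset_Icc_right ht₀.2))
        (fun u hu => (hdy u ⟨hu.1.le, le_trans hu.2 ht₀.2⟩).mono_of_mem_nhdsWithin
          (Icc_mem_nhdsLE_of_mem ⟨hu.1, le_trans hu.2 ht₀.2⟩))
        (fun u hu => hmems y hy u ⟨hu.1.le, le_trans hu.2 ht₀.2⟩)
        (by rw [hix, hiy]) t ⟨ht.1, h⟩
      refine est.trans ?_
      gcongr
      · exact Real.exp_le_exp.mpr (by
          have : t₀ - t ≤ max (tmax - t₀) (t₀ - tmin) := le_max_of_le_right (by linarith [ht.1])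
          nlinarith [K.coe_nonneg])
  -- conclude Lipschitz continuity of the flow on the product
  have hCpos : 0 < C := Real.exp_pos _
  set M : ℝ≥0 := L + C.toNNReal with hM
  have hMcoe : (M : ℝ) = (L : ℝ) + C := by
    rw [hM]
    push_cast
    rw [Real.coe_toNNReal _ hCpos.le]
  refine (LipschitzOnWith.of_dist_le_mul (K := M) ?_).continuousOn
  rintro ⟨t, x⟩ ⟨ht, hx⟩ ⟨u, y⟩ ⟨hu, hy⟩
  have h1 : dist (α x t) (α x u) ≤ L * dist t u := (hα x hx).2.2.dist_le_mul t ht u hu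
  have h2 : dist (α x u) (α y u) ≤ dist x y * C := key x hx y hy u hu
  have htu : dist t u ≤ dist ((t, x) : ℝ × E) (u, y) := by
    rw [Prod.dist_eq]; exact le_max_left _ _
  have hxy : dist x y ≤ dist ((t, x) : ℝ × E) (u, y) := by
    rw [Prod.dist_eq]; exact le_max_right _ _
  calc dist (α x t) (α y u) ≤ dist (α x t) (α x u) + dist (α x u) (α y u) :=
        dist_triangle _ _ _
    _ ≤ L * dist t u + dist x y * C := add_le_add h1 h2
    _ ≤ L * dist ((t, x) : ℝ × E) (u, y) + dist ((t, x) : ℝ × E) (u, y) * C := by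
        gcongr
    _ = M * dist ((t, x) : ℝ × E) (u, y) := by rw [hMcoe]; ring
end

section
/- Let M be a smooth manifold without boundary modelled on a real Banach space E via a model with corners I, and let v be a vector field on M (a section of the tangent bundle, assigning to each x ∈ M an element of the tangent space at x) that is C¹ at a point x₀ ∈ M, in the sense that the map x ↦ (x, v(x)) into the tangent bundle is C¹ at x₀. Then for any t₀ ∈ ℝ there exist ε > 0 and a curve α : ℝ → M such that α(t₀) = x₀ and α is an integral curve of v on the open interval (t₀ − ε, t₀ + ε). -/
open Set Metric
open scoped Manifold Topology

/-- **Local existence of integral curves on manifolds**: if `v` is a vector field on a manifold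
`M` without boundary, modelled on a Banach space `E`, and `v` is `C¹` at `x₀`, then for any
`t₀ : ℝ` there exist `ε > 0` and a curve `α : ℝ → M` with `α t₀ = x₀` that is an integral curve
of `v` on the open interval `(t₀ - ε, t₀ + ε)`. -/
theorem exists_isIntegralCurveOn_Ioo_of_contMDiffAt
    {E : Type*} [NormedAddCommGroup E] [NormedSpace ℝ E] [CompleteSpace E]
    {H : Type*} [TopologicalSpace H] {I : ModelWithCorners ℝ E H} [I.Boundaryless]
    {M : Type*} [TopologicalSpace M] [ChartedSpace H M] [IsManifold I ((⊤ : ℕ∞) : WithTop ℕ∞) M]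
    {v : (x : M) → TangentSpace I x} {x₀ : M}
    (hv : ContMDiffAt I I.tangent 1 (fun x => (⟨x, v x⟩ : TangentBundle I M)) x₀)
    (t₀ : ℝ) :
    ∃ ε > (0 : ℝ), ∃ α : ℝ → M, α t₀ = x₀ ∧
      ∀ t ∈ Ioo (t₀ - ε) (t₀ + ε),
        HasMFDerivAt 𝓘(ℝ, ℝ) I α t ((1 : ℝ →L[ℝ] ℝ).smulRight (v (α t))) := by
  obtain ⟨α, hα, h⟩ := exists_isMIntegralCurveAt_of_contMDiffAt_boundaryless t₀ hv
  obtain ⟨ε, hε, hball⟩ := Metric.eventually_nhds_iff_ball.mp h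
  refine ⟨ε, hε, α, hα, fun t ht => ?_⟩
  exact hball t (by rwa [Real.ball_eq_Ioo])
end

section
/- Let M be a smooth manifold without boundary modelled on a real Banach space E, and let v be a vector field on M. Let α, β : ℝ → M be integral curves of v on an open interval J containing t₀, with α(t₀) = β(t₀), and suppose v is C¹ at α(t) for every t ∈ J. Then the set {t ∈ J : α(t) = β(t)} is both open and closed in J; consequently α and β agree on all of J. -/
open Set Metric
open scoped Manifold Topology

/-- **Uniqueness of integral curves on manifolds, open-interval version**: if `α` and `β` are
integral curves of a vector field `v` on `J = (a, b) ∋ t₀` with `α t₀ = β t₀`, and `v` is `C¹`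
at `α t` for every `t ∈ J`, then the set `{t ∈ J : α t = β t}` is clopen in `J` (in the subspace
topology); consequently `α = β` on `J`. -/
theorem isIntegralCurveOn_Ioo_isClopen_eqOn_of_contMDiffAt
    {E : Type*} [NormedAddCommGroup E] [NormedSpace ℝ E] [CompleteSpace E]
    {H : Type*} [TopologicalSpace H] {I : ModelWithCorners ℝ E H} [I.Boundaryless]
    {M : Type*} [TopologicalSpace M] [ChartedSpace H M] [IsManifold I (⊤ : ℕ∞) M]
    [T2Space M] {v : (x : M) → TangentSpace I x} {α β : ℝ → M} {a b t₀ : ℝ}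
    (ht₀ : t₀ ∈ Ioo a b)
    (hα : ∀ t ∈ Ioo a b, HasMFDerivAt 𝓘(ℝ, ℝ) I α t ((1 : ℝ →L[ℝ] ℝ).smulRight (v (α t))))
    (hβ : ∀ t ∈ Ioo a b, HasMFDerivAt 𝓘(ℝ, ℝ) I β t ((1 : ℝ →L[ℝ] ℝ).smulRight (v (β t))))
    (heq : α t₀ = β t₀)
    (hv : ∀ t ∈ Ioo a b,
      ContMDiffAt I I.tangent 1 (fun x => (⟨x, v x⟩ : TangentBundle I M)) (α t)) :
    IsClopen {t : Ioo a b | α t = β t} ∧ EqOn α β (Ioo a b) := by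
  have hα' : IsMIntegralCurveOn α v (Ioo a b) := fun t ht ↦ (hα t ht).hasMFDerivWithinAt
  have hβ' : IsMIntegralCurveOn β v (Ioo a b) := fun t ht ↦ (hβ t ht).hasMFDerivWithinAt
  have hclosed : IsClosed {t : Ioo a b | α t = β t} := by
    apply isClosed_eq
    · exact continuous_iff_continuousAt.mpr fun ⟨t, ht⟩ ↦
        ((hα t ht).continuousAt).comp continuousAt_subtype_val
    · exact continuous_iff_continuousAt.mpr fun ⟨t, ht⟩ ↦
        ((hβ t ht).continuousAt).comp continuousAt_subtype_val
  have hopen : IsOpen {t : Ioo a b | α t = β t} := by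
    rw [isOpen_iff_mem_nhds]
    rintro ⟨t, ht⟩ (hts : α t = β t)
    have hmem := Ioo_mem_nhds ht.1 ht.2
    have heq' : α =ᶠ[𝓝 t] β := isMIntegralCurveAt_eventuallyEq_of_contMDiffAt
      BoundarylessManifold.isInteriorPoint (hv t ht)
      (hα'.isMIntegralCurveAt hmem) (hβ'.isMIntegralCurveAt hmem) hts
    exact (continuous_subtype_val.continuousAt (x := (⟨t, ht⟩ : Ioo a b))).preimage_mem_nhds heq'
  refine ⟨⟨hclosed, hopen⟩, ?_⟩
  have : PreconnectedSpace (Ioo a b) := Subtype.preconnectedSpace isPreconnected_Ioo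
  have huniv : {t : Ioo a b | α t = β t} = univ :=
    IsClopen.eq_univ ⟨hclosed, hopen⟩ ⟨⟨t₀, ht₀⟩, heq⟩
  intro t ht
  have : (⟨t, ht⟩ : Ioo a b) ∈ ({t : Ioo a b | α t = β t}) := huniv ▸ mem_univ _
  exact this
end

section
/- Let M be a smooth manifold without boundary modelled on a real Banach space E, and let v be a vector field on M that is C¹ at every point of M. If α, β : ℝ → M are global integral curves of v (integral curves on all of ℝ) with α(t₀) = β(t₀) for some t₀ ∈ ℝ, then α = β. -/
open Set Metric
open scoped Manifold Topology

/-- **Global uniqueness of integral curves on manifolds**: if `v` is a vector field on a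
boundaryless Hausdorff manifold `M` that is `C¹` at every point, then two global integral curves
of `v` that agree at one time `t₀` are equal. -/
theorem isIntegralCurve_eq_of_contMDiffAt'
    {E : Type*} [NormedAddCommGroup E] [NormedSpace ℝ E] [CompleteSpace E]
    {H : Type*} [TopologicalSpace H] {I : ModelWithCorners ℝ E H} [I.Boundaryless]
    {M : Type*} [TopologicalSpace M] [ChartedSpace H M] [IsManifold I (⊤ : ℕ∞) M]
    [T2Space M] {v : (x : M) → TangentSpace I x} {α β : ℝ → M} {t₀ : ℝ}
    (hv : ∀ x : M, ContMDiffAt I I.tangent 1 (fun x => (⟨x, v x⟩ : TangentBundle I M)) x)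
    (hα : ∀ t : ℝ, HasMFDerivAt 𝓘(ℝ, ℝ) I α t ((1 : ℝ →L[ℝ] ℝ).smulRight (v (α t))))
    (hβ : ∀ t : ℝ, HasMFDerivAt 𝓘(ℝ, ℝ) I β t ((1 : ℝ →L[ℝ] ℝ).smulRight (v (β t))))
    (heq : α t₀ = β t₀) :
    α = β := by
  exact isMIntegralCurve_eq_of_contMDiff (fun _ ↦ BoundarylessManifold.isInteriorPoint)
    (fun x ↦ hv x) hα hβ heq
end

section
/- Let M be a compact smooth manifold without boundary modelled on a real Banach space E, and let v be a vector field on M that is C¹ at every point of M. Then for every x₀ ∈ M and t₀ ∈ ℝ there exists a global integral curve α : ℝ → M of v with α(t₀) = x₀, i.e. α(t₀) = x₀ and for every t ∈ ℝ, α has manifold derivative at t equal to the linear map r ↦ r • v(α(t)). -/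
open Set Metric
open scoped Manifold Topology

open scoped NNReal

structure MyIsPicardLindelof {E : Type*} [NormedAddCommGroup E] (v : ℝ → E → E)
    (tMin t₀ tMax : ℝ) (x₀ : E) (L : ℝ≥0) (R C : ℝ) : Prop where
  ht₀ : t₀ ∈ Icc tMin tMax
  hR : 0 ≤ R
  lipschitz : ∀ t ∈ Icc tMin tMax, LipschitzOnWith L (v t) (closedBall x₀ R)
  cont : ∀ x ∈ closedBall x₀ R, ContinuousOn (fun t : ℝ => v t x) (Icc tMin tMax)
  norm_le : ∀ t ∈ Icc tMin tMax, ∀ x ∈ closedBall x₀ R, ‖v t x‖ ≤ C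
  C_mul_le_R : (C : ℝ) * max (tMax - t₀) (t₀ - tMin) ≤ R

theorem my_ipl_exists_mem {E : Type*} [NormedAddCommGroup E] [NormedSpace ℝ E]
    [CompleteSpace E] {v : ℝ → E → E}
    {tMin t₀ tMax : ℝ} (x₀ : E) {C R : ℝ} {L : ℝ≥0}
    (hpl : MyIsPicardLindelof v tMin t₀ tMax x₀ L R C) :
    ∃ f : ℝ → E, f t₀ = x₀ ∧
      ∀ t ∈ Icc tMin tMax, f t ∈ closedBall x₀ R ∧
        HasDerivWithinAt f (v t (f t)) (Icc tMin tMax) t := by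
  lift C to ℝ≥0 using
    (norm_nonneg _).trans (hpl.norm_le _ hpl.ht₀ _ (mem_closedBall_self hpl.hR))
  lift R to ℝ≥0 using hpl.hR
  lift t₀ to Icc tMin tMax using hpl.ht₀
  have hf : IsPicardLindelof v t₀ x₀ R 0 C L :=
    ⟨hpl.lipschitz, hpl.cont, hpl.norm_le, by simpa using hpl.C_mul_le_R⟩
  obtain ⟨α, hα⟩ := ODE.FunSpace.exists_isFixedPt_next hf (mem_closedBall_self le_rfl)
  refine ⟨α.compProj, by rw [ODE.FunSpace.compProj_val, ← hα, ODE.FunSpace.next_apply₀],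
    fun t ht ↦ ⟨α.compProj_mem_closedBall hf.mul_max_le, ?_⟩⟩
  apply ODE.hasDerivWithinAt_picard_Icc t₀.2 hf.continuousOn_uncurry
    α.continuous_compProj.continuousOn (fun _ ht' ↦ α.compProj_mem_closedBall hf.mul_max_le)
    x₀ ht |>.congr_of_mem _ ht
  intro t' ht'
  nth_rw 1 [← hα]
  rw [ODE.FunSpace.compProj_of_mem ht', ODE.FunSpace.next_apply]

theorem my_euclid_uniform {E : Type*} [NormedAddCommGroup E] [NormedSpace ℝ E]
    [CompleteSpace E] {w : E → E} {x₀ : E} (hw : ContDiffAt ℝ 1 w x₀)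
    {K : Set E} (hK : K ∈ 𝓝 x₀) :
    ∃ ε > (0 : ℝ), ∃ R > (0 : ℝ), ∀ y ∈ closedBall x₀ R, ∃ f : ℝ → E, f 0 = y ∧
      ∀ t ∈ Ioo (-ε) ε, f t ∈ K ∧ HasDerivAt f (w (f t)) t := by
  obtain ⟨L, s, hs, hlip⟩ := hw.exists_lipschitzOnWith
  obtain ⟨R₁, hR₁, hball⟩ := Metric.mem_nhds_iff.mp hs
  obtain ⟨R₂, hR₂, hbdd⟩ := Metric.continuousAt_iff.mp hw.continuousAt.norm 1 zero_lt_one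
  have hbdd' : ∀ x ∈ ball x₀ R₂, ‖w x‖ ≤ 1 + ‖w x₀‖ := fun _ hx =>
    sub_le_iff_le_add.mp <| le_of_lt <| lt_of_abs_lt <| Real.dist_eq _ _ ▸ hbdd hx
  obtain ⟨R₃, hR₃, hKball⟩ := Metric.mem_nhds_iff.mp hK
  set m := min R₁ (min R₂ R₃) with hm
  have hm0 : 0 < m := lt_min hR₁ (lt_min hR₂ hR₃)
  set R := m / 4 with hRdef
  have hR0 : 0 < R := by positivity
  set C := 1 + ‖w x₀‖ with hC
  have hC0 : 0 < C := add_pos_of_pos_of_nonneg one_pos (norm_nonneg _)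
  set ε := R / C with hε
  have hε0 : 0 < ε := div_pos hR0 hC0
  have hsub : closedBall x₀ (3 * R) ⊆ ball x₀ m := by
    apply closedBall_subset_ball; rw [hRdef]; linarith
  refine ⟨ε, hε0, R, hR0, fun y hy => ?_⟩
  have hsub' : closedBall y (2 * R) ⊆ closedBall x₀ (3 * R) := by
    apply closedBall_subset_closedBall'
    rw [mem_closedBall] at hy; linarith
  have hpl : MyIsPicardLindelof (fun _ => w) (-ε) 0 ε y L (2 * R) C :=
    { ht₀ := ⟨neg_nonpos.mpr hε0.le, hε0.le⟩
      hR := by positivity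
      lipschitz := fun _ _ => hlip.mono <| hsub'.trans <| hsub.trans <|
        (ball_subset_ball (min_le_left _ _)).trans hball
      cont := fun _ _ => continuousOn_const
      norm_le := fun _ _ x hx => hbdd' x <| (hsub'.trans <| hsub.trans <|
        ball_subset_ball ((min_le_right _ _).trans (min_le_left _ _))) hx
      C_mul_le_R := by
        rw [sub_zero, zero_sub, neg_neg, max_self, hε, mul_div_cancel₀ _ hC0.ne']
        linarith }
  obtain ⟨f, hf0, hf⟩ := my_ipl_exists_mem y hpl
  refine ⟨f, hf0, fun t ht => ?_⟩
  obtain ⟨hmem, hderiv⟩ := hf t (Ioo_subset_Icc_self ht)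
  refine ⟨?_, hderiv.hasDerivAt (Icc_mem_nhds ht.1 ht.2)⟩
  exact hKball <| (ball_subset_ball ((min_le_right _ _).trans (min_le_right _ _)))
    <| hsub <| hsub' hmem

theorem my_manifold_uniform
    {E : Type*} [NormedAddCommGroup E] [NormedSpace ℝ E] [CompleteSpace E]
    {H : Type*} [TopologicalSpace H] {I : ModelWithCorners ℝ E H}
    {M : Type*} [TopologicalSpace M] [ChartedSpace H M] [IsManifold I (⊤ : ℕ∞) M]
    [BoundarylessManifold I M] {v : (x : M) → TangentSpace I x} (x₀ : M)
    (hv : ContMDiffAt I I.tangent 1 (fun x => (⟨x, v x⟩ : TangentBundle I M)) x₀) :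
    ∃ ε > (0 : ℝ), ∃ u ∈ 𝓝 x₀, ∀ y ∈ u, ∃ γ : ℝ → M, γ 0 = y ∧
      IsMIntegralCurveOn γ v (Ioo (-ε) ε) := by
  have hx : I.IsInteriorPoint x₀ := BoundarylessManifold.isInteriorPoint
  rw [contMDiffAt_iff] at hv
  obtain ⟨_, hv⟩ := hv
  have hK : interior (extChartAt I x₀).target ∈ 𝓝 (extChartAt I x₀ x₀) :=
    isOpen_interior.mem_nhds ((I.isInteriorPoint_iff).mp hx)
  obtain ⟨ε, hε, R, hR, hloc⟩ :=
    my_euclid_uniform ((hv.contDiffAt (range_mem_nhds_isInteriorPoint hx)).snd) hK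
  refine ⟨ε, hε, (extChartAt I x₀).source ∩
      extChartAt I x₀ ⁻¹' closedBall (extChartAt I x₀ x₀) R,
    Filter.inter_mem (extChartAt_source_mem_nhds ..)
      ((continuousAt_extChartAt x₀).preimage_mem_nhds (closedBall_mem_nhds _ hR)),
    fun y hy => ?_⟩
  obtain ⟨f, hf1, hf⟩ := hloc (extChartAt I x₀ y) hy.2
  refine ⟨(extChartAt I x₀).symm ∘ f,
    by rw [Function.comp_apply, hf1, PartialEquiv.left_inv _ hy.1], ?_⟩
  intros t ht
  obtain ⟨hf3, h'⟩ := hf t ht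
  -- collect useful terms in convenient forms
  let xₜ : M := (extChartAt I x₀).symm (f t)
  have h : HasDerivAt f (x := t) <| fderivWithin ℝ (extChartAt I x₀ ∘ (extChartAt I xₜ).symm)
    (range I) (extChartAt I xₜ xₜ) (v xₜ) := h'
  rw [← tangentCoordChange_def] at h
  have hf3' := mem_of_mem_of_subset hf3 interior_subset
  have hft1 := mem_preimage.mp <|
    mem_of_mem_of_subset hf3' (extChartAt I x₀).target_subset_preimage_source
  have hft2 := mem_extChartAt_source (I := I) xₜ
  -- express the derivative of the integral curve in the local chart
  apply HasMFDerivAt.hasMFDerivWithinAt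
  refine ⟨(continuousAt_extChartAt_symm'' hf3').comp h.continuousAt,
    ?_⟩
  rw [ContinuousLinearMap.smulRight_one_eq_toSpanSingleton]
  refine @HasDerivWithinAt.hasFDerivWithinAt _ _ _ _ _ _ _ _ _
    (by exact inferInstanceAs (ContinuousSMul ℝ E)) _ ?_
  simp only [mfld_simps, hasDerivWithinAt_univ]
  apply HasDerivAt.hasDerivWithinAt
  show HasDerivAt ((extChartAt I xₜ ∘ (extChartAt I x₀).symm) ∘ f) (v xₜ) t
  rw [← tangentCoordChange_self (I := I) (x := xₜ) (z := xₜ) (v := v xₜ) hft2,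
    ← tangentCoordChange_comp (I := I) (x := x₀) (v := v xₜ) ⟨⟨hft2, hft1⟩, hft2⟩]
  apply HasFDerivAt.comp_hasDerivAt _ _ h
  apply HasFDerivWithinAt.hasFDerivAt (s := range I) _ <|
    mem_nhds_iff.mpr ⟨interior (extChartAt I x₀).target,
      subset_trans interior_subset (extChartAt_target_subset_range ..),
      isOpen_interior, hf3⟩
  rw [← (extChartAt I x₀).right_inv hf3']
  exact hasFDerivWithinAt_tangentCoordChange ⟨hft1, hft2⟩

/-- **Global existence of integral curves on compact manifolds**: if `M` is a compact
boundaryless Hausdorff manifold modelled on a Banach space `E` and `v` is a vector field on `M`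
that is `C¹` at every point, then through every point `x₀` at every time `t₀` there is a global
integral curve `α : ℝ → M` of `v` with `α t₀ = x₀`. -/
theorem exists_isIntegralCurve_of_compactSpace
    {E : Type*} [NormedAddCommGroup E] [NormedSpace ℝ E] [CompleteSpace E]
    {H : Type*} [TopologicalSpace H] {I : ModelWithCorners ℝ E H} [I.Boundaryless]
    {M : Type*} [TopologicalSpace M] [ChartedSpace H M] [IsManifold I (⊤ : ℕ∞) M]
    [T2Space M] [CompactSpace M] {v : (x : M) → TangentSpace I x}
    (hv : ∀ x : M, ContMDiffAt I I.tangent 1 (fun x => (⟨x, v x⟩ : TangentBundle I M)) x) :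
    ∀ (x₀ : M) (t₀ : ℝ), ∃ α : ℝ → M, α t₀ = x₀ ∧
      ∀ t : ℝ, HasMFDerivAt 𝓘(ℝ, ℝ) I α t ((1 : ℝ →L[ℝ] ℝ).smulRight (v (α t))) := by
  intro x₀ t₀
  have hvC : ContMDiff I I.tangent 1 (fun x => (⟨x, v x⟩ : TangentBundle I M)) :=
    fun x => (hv x).contMDiffWithinAt
  choose ε hε u hu hloc using fun x : M => my_manifold_uniform x (hv x)
  obtain ⟨s, -, hs⟩ := isCompact_univ.elim_nhds_subcover u fun x _ => hu x
  have hsne : s.Nonempty := by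
    rcases Finset.eq_empty_or_nonempty s with rfl | h
    · simpa using hs (mem_univ x₀)
    · exact h
  set δ := s.inf' hsne ε with hδ
  have hδ0 : 0 < δ := by
    exact (Finset.lt_inf'_iff hsne).mpr fun x _ => hε x
  have key : ∀ y : M, ∃ γ : ℝ → M, γ 0 = y ∧ IsMIntegralCurveOn γ v (Ioo (-δ) δ) := by
    intro y
    obtain ⟨x, hxs, hyu⟩ := Set.mem_iUnion₂.mp (hs (mem_univ y))
    obtain ⟨γ, hγ0, hγ⟩ := hloc x y hyu
    refine ⟨γ, hγ0, hγ.mono (Ioo_subset_Ioo ?_ ?_)⟩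
    · exact neg_le_neg (Finset.inf'_le _ hxs)
    · exact Finset.inf'_le _ hxs
  obtain ⟨γ, hγ0, hγ⟩ := exists_isMIntegralCurve_of_isMIntegralCurveOn hvC hδ0 key x₀
  refine ⟨γ ∘ (· + -t₀), by simp [hγ0], ?_⟩
  exact hγ.comp_add (-t₀)
end
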